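/- arXiv:1812.01290 — 2 statements merged into one kernel-verified Lean document; each statement's English description precedes it below -/
import Mathlib

section
/- Let f, g : ℝ² → ℝ be C¹ functions satisfying f_x = g_y, and define A_n(x,y), B_n(x,y) as the polynomials A_n = (1/(2(n+1)!))[(f+ig)^{n+1}+(f−ig)^{n+1}], B_n = (1/(2i(n+1)!))[(f+ig)^{n+1}−(f−ig)^{n+1}] evaluated at (f(x,y), g(x,y)). Then for all n ≥ 0: A_n·(f_y + g_x) = (A_{n+1})_y + (B_{n+1})_x. -/
noncomputable def An (n : ℕ) (a b : ℝ) : ℝ :=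
  ((((a : ℂ) + Complex.I * b) ^ (n + 1) + ((a : ℂ) - Complex.I * b) ^ (n + 1)) /
    (2 * ((n + 1).factorial : ℂ))).re

noncomputable def Bn (n : ℕ) (a b : ℝ) : ℝ :=
  ((((a : ℂ) + Complex.I * b) ^ (n + 1) - ((a : ℂ) - Complex.I * b) ^ (n + 1)) /
    (2 * Complex.I * ((n + 1).factorial : ℂ))).re

lemma An_eq (n : ℕ) (a b : ℝ) :
    An n a b = (((a : ℂ) + Complex.I * b) ^ (n + 1)).re / (n + 1).factorial := by
  have hw : (a : ℂ) - Complex.I * b = (starRingEnd ℂ) ((a : ℂ) + Complex.I * b) := by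
    simp [Complex.ext_iff]
  unfold An
  rw [hw, ← map_pow, Complex.add_conj]
  rw [show (((2 * (((a : ℂ) + Complex.I * b) ^ (n + 1)).re : ℝ)) : ℂ) /
      (2 * ((n + 1).factorial : ℂ)) =
      (((((a : ℂ) + Complex.I * b) ^ (n + 1)).re / (n + 1).factorial : ℝ) : ℂ) from by
    push_cast
    rw [mul_div_mul_left _ _ (two_ne_zero)]]
  exact Complex.ofReal_re _

lemma Bn_eq (n : ℕ) (a b : ℝ) :
    Bn n a b = (((a : ℂ) + Complex.I * b) ^ (n + 1)).im / (n + 1).factorial := by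
  have hw : (a : ℂ) - Complex.I * b = (starRingEnd ℂ) ((a : ℂ) + Complex.I * b) := by
    simp [Complex.ext_iff]
  have hm : (((n + 1).factorial : ℕ) : ℂ) ≠ 0 := by
    exact_mod_cast Nat.factorial_ne_zero (n + 1)
  unfold Bn
  rw [hw, ← map_pow, Complex.sub_conj]
  rw [show (((2 * (((a : ℂ) + Complex.I * b) ^ (n + 1)).im : ℝ)) : ℂ) * Complex.I /
      (2 * Complex.I * ((n + 1).factorial : ℂ)) =
      (((((a : ℂ) + Complex.I * b) ^ (n + 1)).im / (n + 1).factorial : ℝ) : ℂ) from by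
    push_cast
    field_simp [Complex.I_ne_zero]]
  exact Complex.ofReal_re _

/-- For C¹ functions with `f_x = g_y`:
`A_n·(f_y + g_x) = (A_{n+1})_y + (B_{n+1})_x`. -/
theorem stmt4 (f g : ℝ × ℝ → ℝ) (hf : ContDiff ℝ 1 f) (hg : ContDiff ℝ 1 g)
    (hfg : ∀ p : ℝ × ℝ, fderiv ℝ f p (1, 0) = fderiv ℝ g p (0, 1)) :
    ∀ (n : ℕ) (p : ℝ × ℝ),
      An n (f p) (g p) * (fderiv ℝ f p (0, 1) + fderiv ℝ g p (1, 0)) =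
        fderiv ℝ (fun q => An (n + 1) (f q) (g q)) p (0, 1) +
          fderiv ℝ (fun q => Bn (n + 1) (f q) (g q)) p (1, 0) := by
  intro n p
  have hfd : DifferentiableAt ℝ f p := (hf.differentiable one_ne_zero) p
  have hgd : DifferentiableAt ℝ g p := (hg.differentiable one_ne_zero) p
  set F' := fderiv ℝ f p with hF'
  set G' := fderiv ℝ g p with hG'
  set z : ℝ × ℝ → ℂ := fun q => (f q : ℂ) + Complex.I * g q with hz
  set Z' : (ℝ × ℝ) →L[ℝ] ℂ :=
    Complex.ofRealCLM.comp F' + Complex.I • Complex.ofRealCLM.comp G' with hZ'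
  have hzd : HasFDerivAt z Z' p :=
    (Complex.ofRealCLM.hasFDerivAt.comp p hfd.hasFDerivAt).add
      ((Complex.ofRealCLM.hasFDerivAt.comp p hgd.hasFDerivAt).const_mul Complex.I)
  have hpow : HasFDerivAt (fun q => (z q) ^ (n + 2))
      ((((n + 2 : ℕ) : ℂ) * z p ^ (n + 1)) • Z') p := by
    simpa [Function.comp_def] using (hasDerivAt_pow (n + 2) (z p)).comp_hasFDerivAt p hzd
  set c : ℝ := ((n + 2).factorial : ℝ) with hc
  have hA : HasFDerivAt (fun q => An (n + 1) (f q) (g q))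
      (c⁻¹ • (Complex.reCLM.comp ((((n + 2 : ℕ) : ℂ) * z p ^ (n + 1)) • Z'))) p := by
    have h1 := (Complex.reCLM.hasFDerivAt.comp p hpow).const_mul c⁻¹
    have h2 : (fun q => An (n + 1) (f q) (g q))
        = fun q => c⁻¹ * (Complex.reCLM ((z q) ^ (n + 2))) := by
      funext q
      rw [An_eq]
      simp only [Complex.reCLM_apply, hz, hc]
      ring
    rw [h2]
    exact h1
  have hB : HasFDerivAt (fun q => Bn (n + 1) (f q) (g q))
      (c⁻¹ • (Complex.imCLM.comp ((((n + 2 : ℕ) : ℂ) * z p ^ (n + 1)) • Z'))) p := by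
    have h1 := (Complex.imCLM.hasFDerivAt.comp p hpow).const_mul c⁻¹
    have h2 : (fun q => Bn (n + 1) (f q) (g q))
        = fun q => c⁻¹ * (Complex.imCLM ((z q) ^ (n + 2))) := by
      funext q
      rw [Bn_eq]
      simp only [Complex.imCLM_apply, hz, hc]
      ring
    rw [h2]
    exact h1
  rw [hA.fderiv, hB.fderiv, An_eq]
  simp only [ContinuousLinearMap.coe_smul', Pi.smul_apply, ContinuousLinearMap.coe_comp',
    Function.comp_apply, ContinuousLinearMap.smul_apply, Complex.reCLM_apply,
    Complex.imCLM_apply, hZ', ContinuousLinearMap.add_apply, Complex.ofRealCLM_apply,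
    Complex.smul_re, Complex.smul_im, smul_eq_mul]
  have hkey : F' (1, 0) = G' (0, 1) := hfg p
  have hcpos : (0:ℝ) < c := by positivity
  have hfac : c = ((n+2) : ℝ) * ((n+1).factorial : ℝ) := by
    rw [hc]; push_cast [Nat.factorial_succ]; ring
  set w : ℂ := z p ^ (n + 1) with hwdef
  simp only [Complex.mul_re, Complex.mul_im, Complex.add_re, Complex.add_im,
    Complex.I_re, Complex.I_im, Complex.ofReal_re, Complex.ofReal_im,
    Complex.natCast_re, Complex.natCast_im]
  push_cast
  rw [hkey]
  field_simp [hfac]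
  rw [hfac]
  ring
end

section
/- Let f, g : ℝ² → ℝ be C² doubly periodic functions with f_x = g_y, and suppose w : ℝ² → ℝ is C² doubly periodic with Δw = 0 arising as w = K₁g + K₂f + (1/3)g³ − gf² − K₃ for constants K₁, K₂, K₃. If w is harmonic and doubly periodic then w ≡ const; in particular K₁g + K₂f + (1/3)g³ − gf² is constant on ℝ². -/
open MeasureTheory intervalIntegral

section aux

/-- fderiv of a function invariant under translation by `c` is invariant too. -/
lemma fderiv_per {u : ℝ × ℝ → ℝ} (hu : Differentiable ℝ u) (c : ℝ × ℝ)
    (hp : ∀ p, u (p + c) = u p) (p : ℝ × ℝ) : fderiv ℝ u (p + c) = fderiv ℝ u p := by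
  have h1 : HasFDerivAt (fun q : ℝ × ℝ => q + c) (ContinuousLinearMap.id ℝ (ℝ × ℝ)) p :=
    (hasFDerivAt_id p).add_const c
  have h2 := ((hu (p + c)).hasFDerivAt).comp p h1
  rw [show (u ∘ fun q : ℝ × ℝ => q + c) = u from funext hp] at h2
  simpa using h2.fderiv.symm

/-- A continuous nonneg function on `[0,1]` with zero integral vanishes on `[0,1]`. -/
lemma zero_of_integral_zero {φ : ℝ → ℝ} (hc : Continuous φ) (h0 : ∀ x, 0 ≤ φ x)
    (hI : (∫ x in (0:ℝ)..1, φ x) = 0) : ∀ x ∈ Set.Icc (0:ℝ) 1, φ x = 0 := by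
  by_contra h
  push_neg at h
  obtain ⟨x, hx, hne⟩ := h
  have hpos : 0 < ∫ x in (0:ℝ)..1, φ x :=
    intervalIntegral.integral_pos zero_lt_one hc.continuousOn (fun t _ => h0 t)
      ⟨x, hx, lt_of_le_of_ne (h0 x) (Ne.symm hne)⟩
  exact hpos.ne' hI

/-- Fubini swap for iterated interval integrals of a continuous function. -/
lemma swap01 {Φ : ℝ × ℝ → ℝ} (hΦ : Continuous Φ) :
    (∫ y in (0:ℝ)..1, ∫ x in (0:ℝ)..1, Φ (x, y)) =
      ∫ x in (0:ℝ)..1, ∫ y in (0:ℝ)..1, Φ (x, y) := by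
  have hint : Integrable (Function.uncurry fun (y x : ℝ) => Φ (x, y))
      ((volume.restrict (Set.Ioc (0:ℝ) 1)).prod (volume.restrict (Set.Ioc (0:ℝ) 1))) := by
    rw [Measure.prod_restrict]
    have hcs : Continuous fun p : ℝ × ℝ => Φ (p.2, p.1) := hΦ.comp (by fun_prop)
    have : IntegrableOn (fun p : ℝ × ℝ => Φ (p.2, p.1))
        (Set.Icc (0:ℝ) 1 ×ˢ Set.Icc (0:ℝ) 1) (volume.prod volume) := by
      rw [← Measure.volume_eq_prod]
      exact hcs.continuousOn.integrableOn_compact (isCompact_Icc.prod isCompact_Icc)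
    exact this.mono_set (Set.prod_mono Set.Ioc_subset_Icc_self Set.Ioc_subset_Icc_self)
  have := MeasureTheory.integral_integral_swap (f := fun (y x : ℝ) => Φ (x, y))
    (μ := volume.restrict (Set.Ioc (0:ℝ) 1)) (ν := volume.restrict (Set.Ioc (0:ℝ) 1)) hint
  simpa [intervalIntegral.integral_of_le (zero_le_one (α := ℝ))] using this

/-- Key: a doubly periodic C² function on ℝ² whose Laplacian vanishes is constant. -/
lemma harmonic_periodic_const (W : ℝ × ℝ → ℝ) (hW : ContDiff ℝ 2 W)
    (hp1 : ∀ p : ℝ × ℝ, W (p + (1, 0)) = W p) (hp2 : ∀ p : ℝ × ℝ, W (p + (0, 1)) = W p)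
    (hharm : ∀ p : ℝ × ℝ,
      fderiv ℝ (fun q => fderiv ℝ W q (1, 0)) p (1, 0) +
        fderiv ℝ (fun q => fderiv ℝ W q (0, 1)) p (0, 1) = 0) :
    ∀ p q : ℝ × ℝ, W p = W q := by
  classical
  set W1 : ℝ × ℝ → ℝ := fun p => fderiv ℝ W p (1, 0) with hW1def
  set W2 : ℝ × ℝ → ℝ := fun p => fderiv ℝ W p (0, 1) with hW2def
  set W11 : ℝ × ℝ → ℝ := fun p => fderiv ℝ W1 p (1, 0) with hW11def
  set W22 : ℝ × ℝ → ℝ := fun p => fderiv ℝ W2 p (0, 1) with hW22def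
  have hWd : Differentiable ℝ W := hW.differentiable two_ne_zero
  have hfd : ContDiff ℝ 1 (fderiv ℝ W) := hW.fderiv_right (le_refl 2)
  have hW1c : ContDiff ℝ 1 W1 :=
    (ContinuousLinearMap.apply ℝ ℝ ((1:ℝ), (0:ℝ))).contDiff.comp hfd
  have hW2c : ContDiff ℝ 1 W2 :=
    (ContinuousLinearMap.apply ℝ ℝ ((0:ℝ), (1:ℝ))).contDiff.comp hfd
  have hW11c : Continuous W11 :=
    ((ContinuousLinearMap.apply ℝ ℝ ((1:ℝ),(0:ℝ))).contDiff.comp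
      (hW1c.fderiv_right (m := 0) le_rfl)).continuous
  have hW22c : Continuous W22 :=
    ((ContinuousLinearMap.apply ℝ ℝ ((0:ℝ),(1:ℝ))).contDiff.comp
      (hW2c.fderiv_right (m := 0) le_rfl)).continuous
  have hWc : Continuous W := hW.continuous
  -- periodicity of the first derivatives
  have hW1p1 : ∀ p, W1 (p + (1, 0)) = W1 p := fun p => by
    simp only [hW1def]; rw [fderiv_per hWd _ hp1 p]
  have hW1p2 : ∀ p, W1 (p + (0, 1)) = W1 p := fun p => by
    simp only [hW1def]; rw [fderiv_per hWd _ hp2 p]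
  have hW2p1 : ∀ p, W2 (p + (1, 0)) = W2 p := fun p => by
    simp only [hW2def]; rw [fderiv_per hWd _ hp1 p]
  have hW2p2 : ∀ p, W2 (p + (0, 1)) = W2 p := fun p => by
    simp only [hW2def]; rw [fderiv_per hWd _ hp2 p]
  -- derivative computations along horizontal and vertical lines
  have lineX : ∀ (u : ℝ × ℝ → ℝ) (hu : ContDiff ℝ 1 u) (y x : ℝ),
      HasDerivAt (fun t => u (t, y)) (fderiv ℝ u (x, y) (1, 0)) x := by
    intro u hu y x
    have hι : HasDerivAt (fun t : ℝ => ((t, y) : ℝ × ℝ)) ((1:ℝ), (0:ℝ)) x :=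
      HasDerivAt.prodMk (hasDerivAt_id x) (hasDerivAt_const x y)
    exact (hu.differentiable one_ne_zero (x, y)).hasFDerivAt.comp_hasDerivAt x hι
  have lineY : ∀ (u : ℝ × ℝ → ℝ) (hu : ContDiff ℝ 1 u) (x y : ℝ),
      HasDerivAt (fun t => u (x, t)) (fderiv ℝ u (x, y) (0, 1)) y := by
    intro u hu x y
    have hι : HasDerivAt (fun t : ℝ => ((x, t) : ℝ × ℝ)) ((0:ℝ), (1:ℝ)) y :=
      HasDerivAt.prodMk (hasDerivAt_const y x) (hasDerivAt_id y)
    exact (hu.differentiable one_ne_zero (x, y)).hasFDerivAt.comp_hasDerivAt y hι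
  -- integration by parts in x, for fixed y
  have keyX : ∀ y : ℝ,
      (∫ x in (0:ℝ)..1, (W1 (x, y) ^ 2 + W (x, y) * W11 (x, y))) = 0 := by
    intro y
    have hd : ∀ x : ℝ, HasDerivAt (fun t => W (t, y) * W1 (t, y))
        (W1 (x, y) ^ 2 + W (x, y) * W11 (x, y)) x := by
      intro x
      have h1 := lineX W (hW.of_le one_le_two) y x
      have h2 := lineX W1 hW1c y x
      have := h1.mul h2
      refine this.congr_deriv ?_
      simp only [hW1def, hW11def]; ring
    have hcont : Continuous fun x : ℝ => W1 (x, y) ^ 2 + W (x, y) * W11 (x, y) := by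
      have hline : Continuous fun x : ℝ => ((x, y) : ℝ × ℝ) := by fun_prop
      exact ((hW1c.continuous.comp hline).pow 2).add
        ((hWc.comp hline).mul (hW11c.comp hline))
    rw [intervalIntegral.integral_eq_sub_of_hasDerivAt (fun x _ => hd x)
      (hcont.intervalIntegrable 0 1)]
    have e1 : ((1:ℝ), y) = ((0:ℝ), y) + (1, 0) := by simp
    rw [e1, hp1 (0, y), hW1p1 (0, y), sub_self]
  have keyY : ∀ x : ℝ,
      (∫ y in (0:ℝ)..1, (W2 (x, y) ^ 2 + W (x, y) * W22 (x, y))) = 0 := by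
    intro x
    have hd : ∀ y : ℝ, HasDerivAt (fun t => W (x, t) * W2 (x, t))
        (W2 (x, y) ^ 2 + W (x, y) * W22 (x, y)) y := by
      intro y
      have h1 := lineY W (hW.of_le one_le_two) x y
      have h2 := lineY W2 hW2c x y
      have := h1.mul h2
      refine this.congr_deriv ?_
      simp only [hW2def, hW22def]; ring
    have hcont : Continuous fun y : ℝ => W2 (x, y) ^ 2 + W (x, y) * W22 (x, y) := by
      have hline : Continuous fun y : ℝ => ((x, y) : ℝ × ℝ) := by fun_prop
      exact ((hW2c.continuous.comp hline).pow 2).add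
        ((hWc.comp hline).mul (hW22c.comp hline))
    rw [intervalIntegral.integral_eq_sub_of_hasDerivAt (fun y _ => hd y)
      (hcont.intervalIntegrable 0 1)]
    have e1 : (x, (1:ℝ)) = (x, (0:ℝ)) + (0, 1) := by simp
    rw [e1, hp2 (x, 0), hW2p2 (x, 0), sub_self]
  -- the harmonicity: W11 = -W22
  have hlap : ∀ p, W11 p = -W22 p := by
    intro p
    have := hharm p
    simp only [hW11def, hW22def, hW1def, hW2def] at *
    linarith
  -- continuity helpers for x-slices
  have hlinecont : ∀ y : ℝ, Continuous fun x : ℝ => ((x, y) : ℝ × ℝ) := by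
    intro y; fun_prop
  -- Q y = ∫ x, (W1² + W2²)
  set H : ℝ × ℝ → ℝ := fun p => W1 p ^ 2 + W2 p ^ 2 with hHdef
  have hHc : Continuous H := (hW1c.continuous.pow 2).add (hW2c.continuous.pow 2)
  set Q : ℝ → ℝ := fun y => ∫ x in (0:ℝ)..1, H (x, y) with hQdef
  -- rewrite Q y using keyX and harmonicity
  have hQ : ∀ y : ℝ, Q y = ∫ x in (0:ℝ)..1, (W2 (x, y) ^ 2 + W (x, y) * W22 (x, y)) := by
    intro y
    have hι := hlinecont y
    have i1 : IntervalIntegrable (fun x => W1 (x, y) ^ 2 + W (x, y) * W11 (x, y)) volume 0 1 :=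
      (((hW1c.continuous.comp hι).pow 2).add
        ((hWc.comp hι).mul (hW11c.comp hι))).intervalIntegrable 0 1
    have i2 : IntervalIntegrable (fun x => W2 (x, y) ^ 2 + W (x, y) * W22 (x, y)) volume 0 1 :=
      (((hW2c.continuous.comp hι).pow 2).add
        ((hWc.comp hι).mul (hW22c.comp hι))).intervalIntegrable 0 1
    have : Q y = (∫ x in (0:ℝ)..1, (W1 (x, y) ^ 2 + W (x, y) * W11 (x, y))) +
        ∫ x in (0:ℝ)..1, (W2 (x, y) ^ 2 + W (x, y) * W22 (x, y)) := by
      rw [← intervalIntegral.integral_add i1 i2]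
      apply intervalIntegral.integral_congr
      intro x _
      simp only [hHdef]
      rw [hlap (x, y)]
      ring
    rw [this, keyX y, zero_add]
  -- integrate over y and swap
  have hQint : (∫ y in (0:ℝ)..1, Q y) = 0 := by
    have : (∫ y in (0:ℝ)..1, Q y) =
        ∫ y in (0:ℝ)..1, ∫ x in (0:ℝ)..1, (W2 (x, y) ^ 2 + W (x, y) * W22 (x, y)) := by
      apply intervalIntegral.integral_congr
      intro y _; exact hQ y
    rw [this, swap01 (Φ := fun p => W2 p ^ 2 + W p * W22 p) ((hW2c.continuous.pow 2).add (hWc.mul hW22c))]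
    have : (∫ x in (0:ℝ)..1, ∫ y in (0:ℝ)..1, (W2 (x, y) ^ 2 + W (x, y) * W22 (x, y))) =
        ∫ x in (0:ℝ)..1, (0:ℝ) := by
      apply intervalIntegral.integral_congr
      intro x _; exact keyY x
    rw [this, intervalIntegral.integral_const, smul_zero]
  -- Q is continuous, nonneg, integral zero, so Q = 0 on [0,1]
  have hQc : Continuous Q := by
    apply intervalIntegral.continuous_parametric_intervalIntegral_of_continuous'
    exact hHc.comp (by fun_prop)
  have hQ0 : ∀ y, 0 ≤ Q y := by
    intro y
    apply intervalIntegral.integral_nonneg zero_le_one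
    intro x _; positivity
  have hQzero : ∀ y ∈ Set.Icc (0:ℝ) 1, Q y = 0 := zero_of_integral_zero hQc hQ0 hQint
  -- hence H = 0 on [0,1]²
  have hHsq : ∀ x ∈ Set.Icc (0:ℝ) 1, ∀ y ∈ Set.Icc (0:ℝ) 1, H (x, y) = 0 := by
    intro x hx y hy
    have := zero_of_integral_zero (hHc.comp (hlinecont y))
      (fun t => by show (0:ℝ) ≤ W1 (t, y) ^ 2 + W2 (t, y) ^ 2; positivity) (hQzero y hy)
    exact this x hx
  -- periodicity of H
  have hHp1 : ∀ y : ℝ, Function.Periodic (fun t => H (t, y)) 1 := by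
    intro y t
    have e : ((t + 1 : ℝ), y) = ((t, y) : ℝ × ℝ) + (1, 0) := by simp
    show H (t + 1, y) = H (t, y)
    rw [e]
    show W1 ((t, y) + (1, 0)) ^ 2 + W2 ((t, y) + (1, 0)) ^ 2 =
      W1 (t, y) ^ 2 + W2 (t, y) ^ 2
    rw [hW1p1 (t, y), hW2p1 (t, y)]
  have hHp2 : ∀ x : ℝ, Function.Periodic (fun t => H (x, t)) 1 := by
    intro x t
    have e : (x, (t + 1 : ℝ)) = ((x, t) : ℝ × ℝ) + (0, 1) := by simp
    show H (x, t + 1) = H (x, t)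
    rw [e]
    show W1 ((x, t) + (0, 1)) ^ 2 + W2 ((x, t) + (0, 1)) ^ 2 =
      W1 (x, t) ^ 2 + W2 (x, t) ^ 2
    rw [hW1p2 (x, t), hW2p2 (x, t)]
  -- H = 0 everywhere
  have hH0 : ∀ p : ℝ × ℝ, H p = 0 := by
    intro ⟨x, y⟩
    have e1 : H (x, y) = H (Int.fract x, y) := by
      have := (hHp1 y).sub_int_mul_eq (x := x) (n := ⌊x⌋)
      simp only [mul_one] at this
      rw [← this]
      congr 1

    have e2 : H (Int.fract x, y) = H (Int.fract x, Int.fract y) := by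
      have := (hHp2 (Int.fract x)).sub_int_mul_eq (x := y) (n := ⌊y⌋)
      simp only [mul_one] at this
      rw [← this]
      congr 1

    rw [e1, e2]
    exact hHsq _ ⟨Int.fract_nonneg x, (Int.fract_lt_one x).le⟩ _
      ⟨Int.fract_nonneg y, (Int.fract_lt_one y).le⟩
  -- conclude derivatives vanish
  have hW1z : ∀ p, W1 p = 0 := by
    intro p
    have := hH0 p
    simp only [hHdef] at this
    nlinarith [sq_nonneg (W1 p), sq_nonneg (W2 p)]
  have hW2z : ∀ p, W2 p = 0 := by
    intro p
    have := hH0 p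
    simp only [hHdef] at this
    nlinarith [sq_nonneg (W1 p), sq_nonneg (W2 p)]
  have hfz : ∀ p, fderiv ℝ W p = 0 := by
    intro p
    apply ContinuousLinearMap.ext
    intro v
    have hv : (v : ℝ × ℝ) = v.1 • ((1:ℝ), (0:ℝ)) + v.2 • ((0:ℝ), (1:ℝ)) := by
      ext <;> simp
    show fderiv ℝ W p v = 0
    conv_lhs => rw [hv]
    rw [map_add, (fderiv ℝ W p).map_smul, (fderiv ℝ W p).map_smul]
    have h1 : fderiv ℝ W p (1, 0) = 0 := hW1z p
    have h2 : fderiv ℝ W p (0, 1) = 0 := hW2z p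
    rw [h1, h2]
    simp
  intro p q
  exact is_const_of_fderiv_eq_zero hWd hfz p q

end aux


/-- If `w = K₁g + K₂f + g³/3 − gf² − K₃` is harmonic and doubly periodic, then it is
constant; in particular `K₁g + K₂f + g³/3 − gf²` is constant on ℝ². -/
theorem stmt17 (f g : ℝ × ℝ → ℝ) (hf : ContDiff ℝ 2 f) (hg : ContDiff ℝ 2 g)
    (hper1f : ∀ x y : ℝ, f (x + 1, y) = f (x, y))
    (hper2f : ∀ x y : ℝ, f (x, y + 1) = f (x, y))
    (hper1g : ∀ x y : ℝ, g (x + 1, y) = g (x, y))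
    (hper2g : ∀ x y : ℝ, g (x, y + 1) = g (x, y))
    (hfg : ∀ p : ℝ × ℝ, fderiv ℝ f p (1, 0) = fderiv ℝ g p (0, 1)) (K₁ K₂ K₃ : ℝ)
    (w : ℝ × ℝ → ℝ)
    (hw : ∀ p : ℝ × ℝ,
      w p = K₁ * g p + K₂ * f p + (1 / 3) * g p ^ 3 - g p * f p ^ 2 - K₃)
    (hharm : ∀ p : ℝ × ℝ,
      fderiv ℝ (fun q => fderiv ℝ w q (1, 0)) p (1, 0) +
        fderiv ℝ (fun q => fderiv ℝ w q (0, 1)) p (0, 1) = 0) :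
    ∃ c : ℝ, ∀ p : ℝ × ℝ,
      K₁ * g p + K₂ * f p + (1 / 3) * g p ^ 3 - g p * f p ^ 2 = c := by
  have hwW : w = fun p => K₁ * g p + K₂ * f p + (1 / 3) * g p ^ 3 - g p * f p ^ 2 - K₃ :=
    funext hw
  have hWC : ContDiff ℝ 2 w := by
    rw [hwW]
    exact ((((contDiff_const.mul hg).add (contDiff_const.mul hf)).add
      (contDiff_const.mul (hg.pow 3))).sub (hg.mul (hf.pow 2))).sub contDiff_const
  have hfp1 : ∀ p : ℝ × ℝ, f (p + (1, 0)) = f p := by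
    intro p
    have e : p + ((1 : ℝ), (0 : ℝ)) = (p.1 + 1, p.2) := by ext <;> simp
    rw [e]; exact hper1f p.1 p.2
  have hfp2 : ∀ p : ℝ × ℝ, f (p + (0, 1)) = f p := by
    intro p
    have e : p + ((0 : ℝ), (1 : ℝ)) = (p.1, p.2 + 1) := by ext <;> simp
    rw [e]; exact hper2f p.1 p.2
  have hgp1 : ∀ p : ℝ × ℝ, g (p + (1, 0)) = g p := by
    intro p
    have e : p + ((1 : ℝ), (0 : ℝ)) = (p.1 + 1, p.2) := by ext <;> simp
    rw [e]; exact hper1g p.1 p.2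
  have hgp2 : ∀ p : ℝ × ℝ, g (p + (0, 1)) = g p := by
    intro p
    have e : p + ((0 : ℝ), (1 : ℝ)) = (p.1, p.2 + 1) := by ext <;> simp
    rw [e]; exact hper2g p.1 p.2
  have hwp1 : ∀ p : ℝ × ℝ, w (p + (1, 0)) = w p := by
    intro p; rw [hw, hw, hfp1, hgp1]
  have hwp2 : ∀ p : ℝ × ℝ, w (p + (0, 1)) = w p := by
    intro p; rw [hw, hw, hfp2, hgp2]
  have key := harmonic_periodic_const w hWC hwp1 hwp2 hharm
  refine ⟨K₁ * g (0, 0) + K₂ * f (0, 0) + (1 / 3) * g (0, 0) ^ 3 - g (0, 0) * f (0, 0) ^ 2, ?_⟩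
  intro p
  have h := key p (0, 0)
  rw [hw p, hw (0, 0)] at h
  linarith
end
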